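/- Let n ≥ 1 and σ ∈ (0,1) with n > 2σ. The function w(x,y) = (|x|² + y²)^{−(n−2σ)/2}, defined for (x,y) ∈ ℝ^n × (0,∞), satisfies the degenerate elliptic equation div(y^{1−2σ} ∇_{x,y} w) = 0 at every point of ℝ^n × (0,∞); equivalently, Δ_x w + ∂²_y w + ((1−2σ)/y) ∂_y w = 0 on ℝ^n × (0,∞). -/

import Mathlib

open MeasureTheory Real

/-- The Laplacian on `ℝ^n`: sum of second partial derivatives. -/
noncomputable def lap {n : ℕ} (f : EuclideanSpace ℝ (Fin n) → ℝ) :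
    EuclideanSpace ℝ (Fin n) → ℝ :=
  fun x => ∑ i, fderiv ℝ (fun z => fderiv ℝ f z (EuclideanSpace.single i 1)) x
    (EuclideanSpace.single i 1)

/-- The dual kernel `w(x,y) = (|x|² + y²)^(-(n-2σ)/2)`. -/
noncomputable def dualKer (n : ℕ) (σ : ℝ) (x : EuclideanSpace ℝ (Fin n)) (y : ℝ) : ℝ :=
  (‖x‖ ^ 2 + y ^ 2) ^ (-((n : ℝ) - 2 * σ) / 2)

theorem stmt_11 (n : ℕ) (hn : 1 ≤ n) (σ : ℝ) (hσ : σ ∈ Set.Ioo (0:ℝ) 1)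
    (hnσ : 2 * σ < n) :
    ∀ (x : EuclideanSpace ℝ (Fin n)) (y : ℝ), 0 < y →
      lap (fun x' => dualKer n σ x' y) x
        + deriv (fun t => deriv (fun s => dualKer n σ x s) t) y
        + ((1 - 2 * σ) / y) * deriv (fun s => dualKer n σ x s) y = 0 := by
  intro x y hy
  set a : ℝ := -((n : ℝ) - 2 * σ) / 2 with ha
  have hbase : ∀ z : EuclideanSpace ℝ (Fin n), (0:ℝ) < ‖z‖ ^ 2 + y ^ 2 := fun z => by positivity
  set s : ℝ := ‖x‖ ^ 2 + y ^ 2 with hs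
  have hs0 : (0:ℝ) < s := hbase x
  -- base fderiv in x
  have hb : ∀ z : EuclideanSpace ℝ (Fin n),
      HasFDerivAt (fun z' : EuclideanSpace ℝ (Fin n) => ‖z'‖ ^ 2 + y ^ 2)
        ((2:ℝ) • innerSL ℝ z) z := by
    intro z
    have h := ((hasFDerivAt_id z).norm_sq).add_const (y ^ 2)
    refine h.congr_fderiv ?_
    ext v
    simp [two_smul]
  have hfd1 : ∀ z : EuclideanSpace ℝ (Fin n),
      HasFDerivAt (fun z' => dualKer n σ z' y)
        ((a * (‖z‖ ^ 2 + y ^ 2) ^ (a - 1)) • ((2:ℝ) • innerSL ℝ z)) z := by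
    intro z
    exact (hb z).rpow_const (Or.inl (hbase z).ne')
  have hfderiv_apply : ∀ (z : EuclideanSpace ℝ (Fin n)) (i : Fin n),
      fderiv ℝ (fun z' => dualKer n σ z' y) z (EuclideanSpace.single i 1)
        = (a * (‖z‖ ^ 2 + y ^ 2) ^ (a - 1)) * (2 * z i) := by
    intro z i
    rw [(hfd1 z).fderiv]
    simp [EuclideanSpace.inner_single_right, real_inner_comm]
  -- second-order spatial terms
  have hlap_term : ∀ i : Fin n,
      fderiv ℝ (fun z => fderiv ℝ (fun z' => dualKer n σ z' y) z (EuclideanSpace.single i 1)) x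
        (EuclideanSpace.single i 1)
      = 4 * a * (a - 1) * s ^ (a - 2) * (x i) ^ 2 + 2 * a * s ^ (a - 1) := by
    intro i
    have heq : (fun z => fderiv ℝ (fun z' => dualKer n σ z' y) z (EuclideanSpace.single i 1))
        = (fun z : EuclideanSpace ℝ (Fin n) =>
            (a * (‖z‖ ^ 2 + y ^ 2) ^ (a - 1)) * (2 * z i)) := funext (fun z => hfderiv_apply z i)
    rw [heq]
    have hc : HasFDerivAt (fun z : EuclideanSpace ℝ (Fin n) => a * (‖z‖ ^ 2 + y ^ 2) ^ (a - 1))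
        (a • (((a - 1) * (‖x‖ ^ 2 + y ^ 2) ^ (a - 1 - 1)) • ((2:ℝ) • innerSL ℝ x))) x :=
      ((hb x).rpow_const (Or.inl hs0.ne')).const_mul a
    have hd : HasFDerivAt (fun z : EuclideanSpace ℝ (Fin n) => 2 * z i)
        ((2:ℝ) • (EuclideanSpace.proj i : EuclideanSpace ℝ (Fin n) →L[ℝ] ℝ)) x :=
      HasFDerivAt.const_mul
        ((EuclideanSpace.proj i : EuclideanSpace ℝ (Fin n) →L[ℝ] ℝ).hasFDerivAt (x := x)) (2:ℝ)
    rw [HasFDerivAt.fderiv (f := fun z : EuclideanSpace ℝ (Fin n) => a * (‖z‖ ^ 2 + y ^ 2) ^ (a - 1) * (2 * z i)) (hc.mul hd)]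
    simp [EuclideanSpace.inner_single_right, EuclideanSpace.single_apply]
    rw [hs]
    ring
  -- the Laplacian value
  have hnorm : ∑ i, (x i) ^ 2 = ‖x‖ ^ 2 := by
    rw [EuclideanSpace.norm_eq, Real.sq_sqrt (by positivity)]
    simp [Real.norm_eq_abs, sq_abs]
  have hlap : lap (fun x' => dualKer n σ x' y) x
      = 4 * a * (a - 1) * s ^ (a - 2) * ‖x‖ ^ 2 + (n : ℝ) * (2 * a * s ^ (a - 1)) := by
    unfold lap
    rw [Finset.sum_congr rfl (fun i _ => hlap_term i), Finset.sum_add_distrib,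
      Finset.sum_const, ← Finset.mul_sum, hnorm]
    simp [mul_comm]
  -- derivatives in y
  have hd1 : ∀ t : ℝ, (‖x‖ ^ 2 + t ^ 2) ≠ 0 →
      HasDerivAt (fun s' => dualKer n σ x s') (2 * t * a * (‖x‖ ^ 2 + t ^ 2) ^ (a - 1)) t := by
    intro t ht
    have h1 : HasDerivAt (fun s' : ℝ => ‖x‖ ^ 2 + s' ^ 2) (2 * t) t := by
      simpa using (hasDerivAt_pow 2 t).const_add (‖x‖ ^ 2)
    have := h1.rpow_const (p := a) (Or.inl ht)
    exact this
  have hy1 : deriv (fun s' => dualKer n σ x s') y = 2 * y * a * s ^ (a - 1) :=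
    (hd1 y hs0.ne').deriv
  have hev : (fun t => deriv (fun s' => dualKer n σ x s') t)
      =ᶠ[nhds y] (fun t => 2 * t * a * (‖x‖ ^ 2 + t ^ 2) ^ (a - 1)) := by
    filter_upwards [eventually_gt_nhds hy] with t ht
    exact (hd1 t (by positivity)).deriv
  have h2 : HasDerivAt (fun t => 2 * t * a * (‖x‖ ^ 2 + t ^ 2) ^ (a - 1))
      (2 * a * s ^ (a - 1) + 2 * y * a * (2 * y * (a - 1) * s ^ (a - 2))) y := by
    have hA : HasDerivAt (fun t : ℝ => 2 * t * a) (2 * a) y := by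
      simpa using ((hasDerivAt_id y).const_mul 2).mul_const a
    have h1 : HasDerivAt (fun t : ℝ => ‖x‖ ^ 2 + t ^ 2) (2 * y) y := by
      simpa using (hasDerivAt_pow 2 y).const_add (‖x‖ ^ 2)
    have hB := h1.rpow_const (p := a - 1) (Or.inl hs0.ne')
    refine (hA.mul hB).congr_deriv ?_
    rw [hs]
    ring_nf
  have hy2 : deriv (fun t => deriv (fun s' => dualKer n σ x s') t) y
      = 2 * a * s ^ (a - 1) + 2 * y * a * (2 * y * (a - 1) * s ^ (a - 2)) := by
    rw [hev.deriv_eq]; exact h2.deriv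
  -- assemble
  rw [hlap, hy1, hy2]
  have hx2 : ‖x‖ ^ 2 = s - y ^ 2 := by rw [hs]; ring
  have hsplit : s ^ (a - 1) = s ^ (a - 2) * s := by
    rw [show a - 1 = (a - 2) + 1 by ring, Real.rpow_add_one hs0.ne']
  rw [hx2, hsplit]
  have hy' : y ≠ 0 := hy.ne'
  rw [ha]
  field_simp
  ring
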